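/- Let 0 < a ≤ b and 0 < ε < a. Then the function r ↦ 4a(a¹²/r¹² − b⁶/r⁶) − 4ε·|a¹²/r¹² − b⁶/r⁶| on (0,∞) is lower regular. -/

import Mathlib

/-- A function `f` on `(0,∞)` is lower regular if it is bounded below by `-ψ` for
some positive nonincreasing function `ψ` with `∫₀^∞ r·ψ(r) dr < ∞`. -/
def LowerRegular (f : ℝ → ℝ) : Prop :=
  ∃ ψ : ℝ → ℝ, (∀ r > (0 : ℝ), 0 < ψ r) ∧ AntitoneOn ψ (Set.Ioi 0) ∧
    MeasureTheory.IntegrableOn (fun r => r * ψ r) (Set.Ioi 0) ∧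
    ∀ r > (0 : ℝ), -ψ r ≤ f r

theorem stmt5 (a b ε : ℝ) (ha : 0 < a) (hab : a ≤ b) (hε0 : 0 < ε) (hε : ε < a) :
    LowerRegular (fun r =>
      4 * a * (a ^ 12 / r ^ 12 - b ^ 6 / r ^ 6) -
        4 * ε * |a ^ 12 / r ^ 12 - b ^ 6 / r ^ 6|) := by
  have hb : 0 < b := lt_of_lt_of_le ha hab
  set r₀ : ℝ := a ^ 2 / b with hr₀def
  have hr₀ : 0 < r₀ := div_pos (pow_pos ha 2) hb
  set C : ℝ := 4 * (a + ε) * b ^ 6 with hCdef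
  have hC : 0 < C := by positivity
  refine ⟨fun r => C / (max r r₀) ^ 6, ?_, ?_, ?_, ?_⟩
  · intro r hr
    have : 0 < max r r₀ := lt_max_of_lt_right hr₀
    positivity
  · intro x hx y hy hxy
    have hx0 : 0 < max x r₀ := lt_max_of_lt_right hr₀
    have h1 : max x r₀ ≤ max y r₀ := max_le_max hxy le_rfl
    have h2 : (max x r₀) ^ 6 ≤ (max y r₀) ^ 6 := pow_le_pow_left₀ hx0.le h1 6
    exact div_le_div_of_nonneg_left hC.le (pow_pos hx0 6) h2
  · have hsplit : Set.Ioi (0:ℝ) = Set.Ioc 0 r₀ ∪ Set.Ioi r₀ := (Set.Ioc_union_Ioi_eq_Ioi hr₀.le).symm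
    rw [hsplit]
    apply MeasureTheory.IntegrableOn.union
    · have hcont : Continuous fun r : ℝ => r * (C / (max r r₀) ^ 6) := by
        apply continuous_id.mul
        apply continuous_const.div
        · exact (continuous_id.max continuous_const).pow 6
        · intro r
          have : 0 < max r r₀ := lt_max_of_lt_right hr₀
          positivity
      exact hcont.integrableOn_Ioc
    · have h5 : (-5 : ℝ) < -1 := by norm_num
      have := (integrableOn_Ioi_rpow_of_lt h5 hr₀).const_mul C
      apply MeasureTheory.IntegrableOn.congr_fun this ?_ measurableSet_Ioi
      intro r hr
      have hrr : r₀ < r := hr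
      have hrpos : 0 < r := hr₀.trans hrr
      have hmax : max r r₀ = r := max_eq_left hrr.le
      show C * r ^ (-5 : ℝ) = r * (C / (max r r₀) ^ 6)
      rw [hmax, Real.rpow_neg hrpos.le, show (5:ℝ) = ((5:ℕ):ℝ) by norm_num,
        Real.rpow_natCast]
      field_simp
  · intro r hr
    simp only
    set x : ℝ := a ^ 12 / r ^ 12 - b ^ 6 / r ^ 6 with hxdef
    have hmaxpos : 0 < max r r₀ := lt_max_of_lt_right hr₀
    have hψpos : 0 < C / (max r r₀) ^ 6 := by positivity
    rcases le_or_gt r r₀ with hle | hgt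
    · -- here x ≥ 0
      have hr6 : r ^ 6 ≤ r₀ ^ 6 := pow_le_pow_left₀ hr.le hle 6
      have hr06 : r₀ ^ 6 = a ^ 12 / b ^ 6 := by
        rw [hr₀def]; field_simp
      have hx0 : 0 ≤ x := by
        rw [hxdef, sub_nonneg, div_le_div_iff₀ (by positivity) (by positivity)]
        have : b ^ 6 * r ^ 6 ≤ a ^ 12 := by
          have := hr6
          rw [hr06] at this
          calc b ^ 6 * r ^ 6 ≤ b ^ 6 * (a ^ 12 / b ^ 6) := by
                exact mul_le_mul_of_nonneg_left this (by positivity)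
            _ = a ^ 12 := by field_simp
        calc b ^ 6 * r ^ 12 = (b ^ 6 * r ^ 6) * r ^ 6 := by ring
          _ ≤ a ^ 12 * r ^ 6 := by
              exact mul_le_mul_of_nonneg_right this (by positivity)
      rw [abs_of_nonneg hx0]
      have h2 : 0 ≤ 4 * a * x - 4 * ε * x := by nlinarith
      exact le_trans (neg_nonpos_of_nonneg hψpos.le) h2
    · -- r > r₀, max = r
      have hmax : max r r₀ = r := max_eq_left hgt.le
      rw [hmax]
      have hxlb : -(b ^ 6 / r ^ 6) ≤ x := by
        rw [hxdef]
        have : 0 ≤ a ^ 12 / r ^ 12 := by positivity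
        linarith
      rcases le_or_gt 0 x with hx0 | hx0
      · rw [abs_of_nonneg hx0]
        have h1 : 0 ≤ 4 * a * x - 4 * ε * x := by nlinarith
        have h2 : (0:ℝ) < C / r ^ 6 := by positivity
        exact le_trans (neg_nonpos_of_nonneg h2.le) h1
      · rw [abs_of_neg hx0]
        have : 4 * a * x - 4 * ε * (-x) = 4 * (a + ε) * x := by ring
        rw [this]
        have : 4 * (a + ε) * (-(b ^ 6 / r ^ 6)) ≤ 4 * (a + ε) * x :=
          mul_le_mul_of_nonneg_left hxlb (by positivity)
        calc -(C / r ^ 6) = 4 * (a + ε) * (-(b ^ 6 / r ^ 6)) := by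
              rw [hCdef]; field_simp
          _ ≤ 4 * (a + ε) * x := this
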